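/- Let n ≥ 2 be an integer. There exists ε > 0 such that for all real numbers r_1, …, r_{2n+1} with 0 < r_i < ε for all i, one has (2^{2n}/π)·Σ_{k=1}^∞ (sin(k r_1)⋯sin(k r_{2n+1}))/k^{2n−1} = −(1/(2·(2n−2)!))·Σ_{I ⊆ {1,…,2n+1}, |I| odd} sign(r_I − r_{Ī})·(r_I − r_{Ī})^{2n−2}. -/

import Mathlib

open Real Finset

lemma alt_sum_pow_eq_zero {α : Type*} [DecidableEq α] (s : Finset α) (r : α → ℝ) :
    ∀ j : ℕ, j < s.card → ∀ c : ℝ,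
      ∑ I ∈ s.powerset, (-1 : ℝ) ^ I.card *
        (c + (∑ i ∈ s \ I, r i - ∑ i ∈ I, r i)) ^ j = 0 := by
  induction s using Finset.induction_on with
  | empty => intro j hj c; simp at hj
  | @insert a s ha IH =>
    intro j hj c
    rw [Finset.sum_powerset_insert ha]
    have key : ∀ I ∈ s.powerset,
        ((-1 : ℝ) ^ I.card * (c + (∑ i ∈ insert a s \ I, r i - ∑ i ∈ I, r i)) ^ j
        + (-1 : ℝ) ^ (insert a I).card *
          (c + (∑ i ∈ insert a s \ insert a I, r i - ∑ i ∈ insert a I, r i)) ^ j)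
        = ∑ m ∈ Finset.range (j+1), ((c + r a)^m - (c - r a)^m) * (j.choose m) *
            ((-1 : ℝ) ^ I.card * (∑ i ∈ s \ I, r i - ∑ i ∈ I, r i) ^ (j-m)) := by
      intro I hI
      rw [Finset.mem_powerset] at hI
      have haI : a ∉ I := fun h => ha (hI h)
      have h1 : insert a s \ I = insert a (s \ I) := by
        rw [Finset.insert_sdiff_of_notMem _ haI]
      have h2 : insert a s \ insert a I = s \ I := by
        ext x
        simp only [Finset.mem_sdiff, Finset.mem_insert]
        constructor
        · rintro ⟨hx1 | hx1, hx2⟩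
          · exact absurd (Or.inl hx1) hx2
          · exact ⟨hx1, fun h => hx2 (Or.inr h)⟩
        · rintro ⟨hx1, hx2⟩
          exact ⟨Or.inr hx1, fun h => h.elim (fun he => ha (he ▸ hx1)) hx2⟩
      have h3 : a ∉ s \ I := fun h => ha (Finset.mem_sdiff.mp h).1
      rw [h1, Finset.sum_insert h3, Finset.sum_insert haI, Finset.card_insert_of_notMem haI,
        h2, pow_succ]
      have e1 : c + (r a + ∑ i ∈ s \ I, r i - ∑ i ∈ I, r i)
          = (c + r a) + (∑ i ∈ s \ I, r i - ∑ i ∈ I, r i) := by ring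
      have e2 : c + (∑ i ∈ s \ I, r i - (r a + ∑ i ∈ I, r i))
          = (c - r a) + (∑ i ∈ s \ I, r i - ∑ i ∈ I, r i) := by ring
      rw [e1, e2, add_pow, add_pow, Finset.mul_sum, Finset.mul_sum, ← Finset.sum_add_distrib]
      refine Finset.sum_congr rfl fun m hm => ?_
      ring
    rw [← Finset.sum_add_distrib, Finset.sum_congr rfl key, Finset.sum_comm]
    refine Finset.sum_eq_zero fun m hm => ?_
    rw [Finset.mem_range] at hm
    rcases Nat.eq_zero_or_pos m with hm0 | hm0
    · simp [hm0]
    · have hjm : j - m < s.card := by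
        have hcard : j ≤ s.card := by
          have := Finset.card_insert_of_notMem ha
          omega
        omega
      have := IH (j - m) hjm 0
      simp only [zero_add] at this
      rw [← Finset.mul_sum]
      rw [show (∑ I ∈ s.powerset, (-1:ℝ)^I.card * (∑ i ∈ s \ I, r i - ∑ i ∈ I, r i)^(j-m)) = 0
        from this, mul_zero]

lemma sum_not_odd_eq_sum_odd_compl {α : Type*} [Fintype α] [DecidableEq α]
    {M : Type*} [AddCommMonoid M] (hodd : Odd (Fintype.card α)) (f : Finset α → M) :
    ∑ A ∈ Finset.univ.filter (fun A : Finset α => ¬ Odd A.card), f A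
      = ∑ A ∈ Finset.univ.filter (fun A : Finset α => Odd A.card), f Aᶜ := by
  refine Finset.sum_nbij' (fun A => Aᶜ) (fun A => Aᶜ) ?_ ?_ ?_ ?_ ?_
  · intro A hA
    simp only [Finset.mem_filter, Finset.mem_univ, true_and] at hA ⊢
    rw [Finset.card_compl]
    rw [Nat.not_odd_iff_even] at hA
    exact Nat.Odd.sub_even (Finset.card_le_univ A) hodd hA
  · intro A hA
    simp only [Finset.mem_filter, Finset.mem_univ, true_and] at hA ⊢
    rw [Finset.card_compl, Nat.not_odd_iff_even]
    exact Nat.Odd.sub_odd hodd hA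
  · intro A _; exact compl_compl A
  · intro A _; exact compl_compl A
  · intro A _; rw [compl_compl]

lemma odd_subset_sum_pow {N : ℕ} (hN : Odd N) (r : Fin N → ℝ) (j : ℕ) (hj : Odd j)
    (hjN : j < N) :
    ∑ I ∈ Finset.univ.filter (fun I : Finset (Fin N) => Odd I.card),
      (∑ i ∈ I, r i - ∑ i ∈ Iᶜ, r i) ^ j = 0 := by
  have hall : ∑ I : Finset (Fin N), (-1 : ℝ) ^ I.card *
      (∑ i ∈ I, r i - ∑ i ∈ Iᶜ, r i) ^ j = 0 := by
    have h := alt_sum_pow_eq_zero (Finset.univ : Finset (Fin N)) r j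
      (by simpa using hjN) 0
    rw [← Finset.powerset_univ]
    rw [← neg_eq_zero, ← Finset.sum_neg_distrib]
    rw [← h]
    refine Finset.sum_congr rfl fun I _ => ?_
    rw [← Finset.compl_eq_univ_sdiff, zero_add]
    have : (∑ i ∈ Iᶜ, r i - ∑ i ∈ I, r i) = -(∑ i ∈ I, r i - ∑ i ∈ Iᶜ, r i) := by ring
    rw [this, Odd.neg_pow hj]
    ring
  have hsplit := Finset.sum_filter_add_sum_filter_not Finset.univ
    (fun I : Finset (Fin N) => Odd I.card)
    (fun I => (-1 : ℝ) ^ I.card * (∑ i ∈ I, r i - ∑ i ∈ Iᶜ, r i) ^ j)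
  rw [hall] at hsplit
  rw [sum_not_odd_eq_sum_odd_compl (by simpa using hN)] at hsplit
  have heq : ∀ A ∈ Finset.univ.filter (fun A : Finset (Fin N) => Odd A.card),
      (-1 : ℝ) ^ Aᶜ.card * (∑ i ∈ Aᶜ, r i - ∑ i ∈ Aᶜᶜ, r i) ^ j
        = (-1 : ℝ) ^ A.card * (∑ i ∈ A, r i - ∑ i ∈ Aᶜ, r i) ^ j := by
    intro A hA
    simp only [Finset.mem_filter, Finset.mem_univ, true_and] at hA
    rw [compl_compl, Finset.card_compl, Fintype.card_fin]
    have hsub : Even (N - A.card) := Nat.Odd.sub_odd hN hA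
    rw [Even.neg_one_pow hsub, Odd.neg_one_pow hA]
    have : (∑ i ∈ Aᶜ, r i - ∑ i ∈ A, r i) = -(∑ i ∈ A, r i - ∑ i ∈ Aᶜ, r i) := by ring
    rw [this, Odd.neg_pow hj]
    ring
  rw [Finset.sum_congr rfl heq] at hsplit
  have h2 : (2:ℝ) * ∑ A ∈ Finset.univ.filter (fun A : Finset (Fin N) => Odd A.card),
      (-1 : ℝ) ^ A.card * (∑ i ∈ A, r i - ∑ i ∈ Aᶜ, r i) ^ j = 0 := by
    rw [two_mul]; exact hsplit
  have h3 := mul_eq_zero.mp h2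
  rcases h3 with h3 | h3
  · norm_num at h3
  · rw [← neg_eq_zero, ← Finset.sum_neg_distrib] at h3
    rw [← h3]
    refine Finset.sum_congr rfl fun A hA => ?_
    simp only [Finset.mem_filter, Finset.mem_univ, true_and] at hA
    rw [Odd.neg_one_pow hA]
    ring

lemma sum_not_odd_eq_sum_odd_compl' {α : Type*} [Fintype α] [DecidableEq α]
    {M : Type*} [AddCommMonoid M] (hodd : Odd (Fintype.card α)) (f : Finset α → M) :
    ∑ A ∈ Finset.univ.filter (fun A : Finset α => ¬ Odd A.card), f A
      = ∑ A ∈ Finset.univ.filter (fun A : Finset α => Odd A.card), f Aᶜ := by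
  refine Finset.sum_nbij' (fun A => Aᶜ) (fun A => Aᶜ) ?_ ?_ ?_ ?_ ?_
  · intro A hA
    simp only [Finset.mem_filter, Finset.mem_univ, true_and] at hA ⊢
    rw [Finset.card_compl]
    rw [Nat.not_odd_iff_even] at hA
    exact Nat.Odd.sub_even (Finset.card_le_univ A) hodd hA
  · intro A hA
    simp only [Finset.mem_filter, Finset.mem_univ, true_and] at hA ⊢
    rw [Finset.card_compl, Nat.not_odd_iff_even]
    exact Nat.Odd.sub_odd hodd hA
  · intro A _; exact compl_compl A
  · intro A _; exact compl_compl A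
  · intro A _; rw [compl_compl]

lemma exp_sub_exp (z : ℂ) : Complex.exp (-z * Complex.I) - Complex.exp (z * Complex.I)
    = -2 * Complex.I * Complex.sin z := by
  rw [Complex.sin]
  linear_combination (Complex.exp (-z * Complex.I) - Complex.exp (z * Complex.I)) * Complex.I_sq

lemma prod_sin_complex (n : ℕ) (b : Fin (2*n+1) → ℂ) :
    ∏ i, Complex.sin (b i) = (-1 : ℂ)^n / 2^(2*n) *
      ∑ I ∈ Finset.univ.filter (fun I : Finset (Fin (2*n+1)) => Odd I.card),
        Complex.sin (∑ i ∈ I, b i - ∑ i ∈ Iᶜ, b i) := by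
  have hodd : Odd (Fintype.card (Fin (2*n+1))) := by
    rw [Fintype.card_fin]; exact ⟨n, by ring⟩
  have h1 : ∏ i, Complex.sin (b i)
      = (∏ i, (Complex.exp (-(b i) * Complex.I) + -(Complex.exp (b i * Complex.I))))
          * (Complex.I/2)^(2*n+1) := by
    rw [show ((Complex.I/2)^(2*n+1)) = ∏ _i : Fin (2*n+1), (Complex.I/2) by
      rw [Finset.prod_const, Finset.card_univ, Fintype.card_fin], ← Finset.prod_mul_distrib]
    refine Finset.prod_congr rfl fun i _ => ?_
    rw [Complex.sin]
    ring
  rw [h1, Finset.prod_add]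
  -- rewrite each term of the subset sum
  have h2 : ∀ T ∈ (Finset.univ : Finset (Fin (2*n+1))).powerset,
      (∏ i ∈ T, Complex.exp (-(b i) * Complex.I)) *
        ∏ i ∈ Finset.univ \ T, -(Complex.exp (b i * Complex.I))
      = (-1 : ℂ)^(Tᶜ.card) * Complex.exp (-(∑ i ∈ T, b i - ∑ i ∈ Tᶜ, b i) * Complex.I) := by
    intro T _
    rw [← Finset.compl_eq_univ_sdiff]
    have e1 : ∏ i ∈ T, Complex.exp (-(b i) * Complex.I)
        = Complex.exp (-(∑ i ∈ T, b i) * Complex.I) := by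
      rw [← Complex.exp_sum]
      congr 1
      rw [← Finset.sum_neg_distrib, Finset.sum_mul]
    have e2 : ∏ i ∈ Tᶜ, -(Complex.exp (b i * Complex.I))
        = (-1 : ℂ)^(Tᶜ.card) * Complex.exp ((∑ i ∈ Tᶜ, b i) * Complex.I) := by
      rw [Finset.prod_congr rfl fun i (_ : i ∈ Tᶜ) =>
          (neg_eq_neg_one_mul (Complex.exp (b i * Complex.I))),
        Finset.prod_mul_distrib, Finset.prod_const, ← Complex.exp_sum]
      congr 2
      rw [Finset.sum_mul]
    rw [e1, e2, mul_left_comm, ← Complex.exp_add]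
    congr 2
    ring
  rw [Finset.sum_congr rfl h2, Finset.powerset_univ]
  rw [← Finset.sum_filter_add_sum_filter_not Finset.univ
    (fun T : Finset (Fin (2*n+1)) => Odd T.card)]
  rw [sum_not_odd_eq_sum_odd_compl' hodd]
  rw [← Finset.sum_add_distrib]
  have h3 : ∀ T ∈ Finset.univ.filter (fun T : Finset (Fin (2*n+1)) => Odd T.card),
      ((-1 : ℂ)^(Tᶜ.card) * Complex.exp (-(∑ i ∈ T, b i - ∑ i ∈ Tᶜ, b i) * Complex.I)
        + (-1 : ℂ)^(Tᶜᶜ.card) * Complex.exp (-(∑ i ∈ Tᶜ, b i - ∑ i ∈ Tᶜᶜ, b i) * Complex.I))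
      = -2 * Complex.I * Complex.sin (∑ i ∈ T, b i - ∑ i ∈ Tᶜ, b i) := by
    intro T hT
    simp only [Finset.mem_filter, Finset.mem_univ, true_and] at hT
    rw [compl_compl, Finset.card_compl, Fintype.card_fin]
    have heven : Even (2*n+1 - T.card) := Nat.Odd.sub_odd ⟨n, by ring⟩ hT
    rw [Even.neg_one_pow heven, Odd.neg_one_pow hT, one_mul]
    rw [show (-(∑ i ∈ Tᶜ, b i - ∑ i ∈ T, b i) * Complex.I)
      = (∑ i ∈ T, b i - ∑ i ∈ Tᶜ, b i) * Complex.I by ring]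
    rw [← exp_sub_exp]
    ring
  rw [Finset.sum_congr rfl h3, ← Finset.mul_sum]
  have hI2 : Complex.I ^ (2*n) = (-1 : ℂ)^n := by rw [pow_mul, Complex.I_sq]
  have hsc : (-2 * Complex.I) * (Complex.I/2)^(2*n+1) = (-1 : ℂ)^n / 2^(2*n) := by
    rw [div_pow, pow_succ Complex.I (2*n), hI2, pow_succ (2:ℂ) (2*n)]
    linear_combination (-((-1:ℂ)^n) / 2^(2*n)) * Complex.I_sq
  rw [mul_right_comm, hsc]

lemma prod_sin_real (n : ℕ) (a : Fin (2*n+1) → ℝ) :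
    ∏ i, Real.sin (a i) = (-1 : ℝ)^n / 2^(2*n) *
      ∑ I ∈ Finset.univ.filter (fun I : Finset (Fin (2*n+1)) => Odd I.card),
        Real.sin (∑ i ∈ I, a i - ∑ i ∈ Iᶜ, a i) := by
  have h := prod_sin_complex n (fun i => (a i : ℂ))
  rw [← Complex.ofReal_inj]
  push_cast
  convert h using 2 <;> push_cast <;> ring_nf

lemma hasSum_sin_shift (m : ℕ) (hm : m ≠ 0) {t : ℝ} (ht0 : 0 ≤ t) (ht : t ≤ 2*π) :
    HasSum (fun k : ℕ => Real.sin (((k:ℝ)+1) * t) / ((k:ℝ)+1)^(2*m+1))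
      ((-1 : ℝ)^(m+1) * (2*π)^(2*m+1) / 2 / (2*m+1).factorial *
        (Polynomial.map (algebraMap ℚ ℝ) (Polynomial.bernoulli (2*m+1))).eval (t/(2*π))) := by
  have hπ : (0:ℝ) < π := Real.pi_pos
  have hx : t/(2*π) ∈ Set.Icc (0:ℝ) 1 := by
    constructor
    · positivity
    · rw [div_le_one (by positivity)]; exact ht
  have h := hasSum_one_div_nat_pow_mul_sin hm hx
  have hfun : ∀ k : ℕ, (1 : ℝ) / (k : ℝ) ^ (2*m+1) * Real.sin (2 * π * k * (t/(2*π)))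
      = Real.sin ((k:ℝ) * t) / (k:ℝ)^(2*m+1) := by
    intro k
    have : 2 * π * (k:ℝ) * (t/(2*π)) = (k:ℝ) * t := by
      field_simp
    rw [this]
    ring
  rw [show (fun k : ℕ => (1 : ℝ) / (k : ℝ) ^ (2*m+1) * Real.sin (2 * π * k * (t/(2*π))))
      = (fun k : ℕ => Real.sin ((k:ℝ) * t) / (k:ℝ)^(2*m+1)) from funext hfun] at h
  have h2 := (hasSum_nat_add_iff' (f := fun k : ℕ => Real.sin ((k:ℝ) * t) / (k:ℝ)^(2*m+1)) 1).mpr h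
  simp only [Finset.range_one, Finset.sum_singleton, Nat.cast_zero, zero_mul, Real.sin_zero,
    zero_div, sub_zero] at h2
  convert h2 using 2 with k
  · rfl
  push_cast
  ring_nf

lemma hasSum_sin_signed (m : ℕ) (hm : m ≠ 0) {t : ℝ} (ht : |t| ≤ 2*π) :
    HasSum (fun k : ℕ => Real.sin (((k:ℝ)+1) * t) / ((k:ℝ)+1)^(2*m+1))
      (Real.sign t * ((-1 : ℝ)^(m+1) * (2*π)^(2*m+1) / 2 / (2*m+1).factorial *
        (Polynomial.map (algebraMap ℚ ℝ) (Polynomial.bernoulli (2*m+1))).eval (|t|/(2*π)))) := by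
  rcases lt_trichotomy t 0 with htn | htz | htp
  · have h := hasSum_sin_shift m hm (neg_nonneg.mpr htn.le)
      (by rw [abs_of_neg htn] at ht; exact ht)
    have h2 := h.neg
    rw [Real.sign_of_neg htn, abs_of_neg htn]
    convert h2 using 1
    · rfl
    · funext k
      rw [show ((k:ℝ)+1) * (-t) = -(((k:ℝ)+1) * t) by ring, Real.sin_neg]
      ring
    · ring
  · subst htz
    rw [Real.sign_zero, zero_mul]
    convert hasSum_zero with k
    simp
  · have h := hasSum_sin_shift m hm htp.le (by rw [abs_of_pos htp] at ht; exact ht)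
    rw [Real.sign_of_pos htp, abs_of_pos htp, one_mul]
    exact h

lemma bernoulli_eval_map (M : ℕ) (y : ℝ) :
    (Polynomial.map (algebraMap ℚ ℝ) (Polynomial.bernoulli M)).eval y
      = ∑ i ∈ Finset.range (M+1), ((bernoulli i : ℝ) * (M.choose i : ℝ)) * y^(M-i) := by
  rw [Polynomial.bernoulli, Polynomial.map_sum, Polynomial.eval_finset_sum]
  refine Finset.sum_congr rfl fun i _ => ?_
  rw [Polynomial.map_monomial, Polynomial.eval_monomial, eq_ratCast]
  push_cast
  ring

lemma sign_mul_abs_pow_odd (u : ℝ) {j : ℕ} (hj : Odd j) :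
    Real.sign u * |u|^j = u^j := by
  rcases lt_trichotomy u 0 with h | h | h
  · rw [Real.sign_of_neg h, abs_of_neg h, Odd.neg_pow hj]; ring
  · subst h
    simp [Real.sign_zero, zero_pow hj.pos.ne']
  · rw [Real.sign_of_pos h, abs_of_pos h, one_mul]

lemma abs_pow_even (u : ℝ) {j : ℕ} (hj : Even j) : |u|^j = u^j := by
  rw [← abs_pow, abs_of_nonneg (hj.pow_nonneg u)]

lemma bernoulli_odd_zero {i : ℕ} (hi : Odd i) (hi1 : i ≠ 1) : (bernoulli i : ℚ) = 0 := by
  rw [bernoulli_eq_bernoulli'_of_ne_one hi1]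
  refine bernoulli'_eq_zero_of_odd hi ?_
  rcases hi with ⟨k, rfl⟩
  omega

theorem euclidean_volume_odd (n : ℕ) (hn : 2 ≤ n) :
    ∃ ε > 0, ∀ r : Fin (2 * n + 1) → ℝ, (∀ i, 0 < r i ∧ r i < ε) →
      (2 ^ (2 * n) / π) *
        ∑' k : ℕ, (∏ i, Real.sin (((k : ℝ) + 1) * r i)) / ((k : ℝ) + 1) ^ (2 * n - 1) =
      -(1 / (2 * (Nat.factorial (2 * n - 2) : ℝ))) *
        ∑ I ∈ Finset.univ.filter (fun I : Finset (Fin (2 * n + 1)) => Odd I.card),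
          Real.sign (∑ i ∈ I, r i - ∑ i ∈ Iᶜ, r i) *
            (∑ i ∈ I, r i - ∑ i ∈ Iᶜ, r i) ^ (2 * n - 2) := by
  refine ⟨1/(2*(n:ℝ)+1), by positivity, fun r hr => ?_⟩
  set m := n - 1 with hmdef
  have hm : m ≠ 0 := by omega
  have hnm : n = m + 1 := by omega
  have h21 : 2*n - 1 = 2*m + 1 := by omega
  have h22 : 2*n - 2 = 2*m := by omega
  have hπ : (0:ℝ) < π := Real.pi_pos
  have hrpos : ∀ i, 0 < r i := fun i => (hr i).1
  have htotal : ∑ i, r i < 1 := by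
    have h1 : ∑ i, r i < ∑ _i : Fin (2*n+1), 1/(2*(n:ℝ)+1) :=
      Finset.sum_lt_sum_of_nonempty ⟨0, Finset.mem_univ _⟩ (fun i _ => (hr i).2)
    have h2 : ∑ _i : Fin (2*n+1), 1/(2*(n:ℝ)+1) = 1 := by
      rw [Finset.sum_const, Finset.card_univ, Fintype.card_fin, nsmul_eq_mul]
      push_cast
      field_simp
    linarith
  have htb : ∀ I : Finset (Fin (2*n+1)), |∑ i ∈ I, r i - ∑ i ∈ Iᶜ, r i| ≤ 2*π := by
    intro I
    have hIc : ∑ i ∈ I, r i + ∑ i ∈ Iᶜ, r i = ∑ i, r i := Finset.sum_add_sum_compl I r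
    have hI1 : (0:ℝ) ≤ ∑ i ∈ I, r i := Finset.sum_nonneg fun i _ => (hrpos i).le
    have hI2 : (0:ℝ) ≤ ∑ i ∈ Iᶜ, r i := Finset.sum_nonneg fun i _ => (hrpos i).le
    have hp : (1:ℝ) ≤ 2*π := by nlinarith [Real.pi_gt_three]
    rw [abs_le]
    constructor <;> nlinarith
  have hS := fun (I : Finset (Fin (2*n+1))) => hasSum_sin_signed m hm (htb I)
  have hsum := (hasSum_sum
    (f := fun (I : Finset (Fin (2*n+1))) (k : ℕ) => Real.sin (((k:ℝ)+1) *
      (∑ i ∈ I, r i - ∑ i ∈ Iᶜ, r i)) / ((k:ℝ)+1)^(2*m+1))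
    (fun I (_ : I ∈ Finset.univ.filter fun I : Finset (Fin (2*n+1)) => Odd I.card) =>
      hS I)).mul_left ((-1:ℝ)^n / 2^(2*n))
  have hfun : (fun k : ℕ => (∏ i, Real.sin (((k:ℝ)+1) * r i)) / ((k:ℝ)+1)^(2*n-1))
      = fun k : ℕ => (-1:ℝ)^n / 2^(2*n) *
          ∑ I ∈ Finset.univ.filter (fun I : Finset (Fin (2*n+1)) => Odd I.card),
            Real.sin (((k:ℝ)+1) * (∑ i ∈ I, r i - ∑ i ∈ Iᶜ, r i)) / ((k:ℝ)+1)^(2*m+1) := by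
    funext k
    rw [h21, prod_sin_real n (fun i => ((k:ℝ)+1) * r i), mul_div_assoc, Finset.sum_div]
    congr 1
    refine Finset.sum_congr rfl fun I _ => ?_
    have harg : ∑ i ∈ I, (((k:ℝ)+1) * r i) - ∑ i ∈ Iᶜ, (((k:ℝ)+1) * r i)
        = ((k:ℝ)+1) * (∑ i ∈ I, r i - ∑ i ∈ Iᶜ, r i) := by
      rw [← Finset.mul_sum, ← Finset.mul_sum]
      ring
    rw [harg]
  rw [hfun, hsum.tsum_eq]
  -- evaluate the sum of closed forms
  have hval : ∑ I ∈ Finset.univ.filter (fun I : Finset (Fin (2*n+1)) => Odd I.card),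
      Real.sign (∑ i ∈ I, r i - ∑ i ∈ Iᶜ, r i) *
        ((-1:ℝ)^(m+1) * (2*π)^(2*m+1) / 2 / (2*m+1).factorial *
          (Polynomial.map (algebraMap ℚ ℝ) (Polynomial.bernoulli (2*m+1))).eval
            (|∑ i ∈ I, r i - ∑ i ∈ Iᶜ, r i|/(2*π)))
      = ((-1:ℝ)^(m+1) * (2*π)^(2*m+1) / 2 / (2*m+1).factorial *
            ((-1/2) * (2*m+1)) / (2*π)^(2*m)) *
        ∑ I ∈ Finset.univ.filter (fun I : Finset (Fin (2*n+1)) => Odd I.card),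
          Real.sign (∑ i ∈ I, r i - ∑ i ∈ Iᶜ, r i) *
            (∑ i ∈ I, r i - ∑ i ∈ Iᶜ, r i)^(2*m) := by
    have hterm : ∀ I ∈ Finset.univ.filter (fun I : Finset (Fin (2*n+1)) => Odd I.card),
        Real.sign (∑ i ∈ I, r i - ∑ i ∈ Iᶜ, r i) *
          ((-1:ℝ)^(m+1) * (2*π)^(2*m+1) / 2 / (2*m+1).factorial *
            (Polynomial.map (algebraMap ℚ ℝ) (Polynomial.bernoulli (2*m+1))).eval
              (|∑ i ∈ I, r i - ∑ i ∈ Iᶜ, r i|/(2*π)))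
        = ∑ j ∈ Finset.range (2*m+2),
            ((-1:ℝ)^(m+1) * (2*π)^(2*m+1) / 2 / (2*m+1).factorial *
              ((bernoulli j : ℝ) * ((2*m+1).choose j)) / (2*π)^(2*m+1-j)) *
            (Real.sign (∑ i ∈ I, r i - ∑ i ∈ Iᶜ, r i) *
              |∑ i ∈ I, r i - ∑ i ∈ Iᶜ, r i|^(2*m+1-j)) := by
      intro I _
      rw [bernoulli_eval_map, Finset.mul_sum, Finset.mul_sum]
      refine Finset.sum_congr rfl fun j _ => ?_
      rw [div_pow]
      ring
    rw [Finset.sum_congr rfl hterm, Finset.sum_comm]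
    rw [Finset.sum_eq_single_of_mem 1 (Finset.mem_range.mpr (by omega)) ?_]
    · rw [← Finset.mul_sum]
      have hch : ((2*m+1).choose 1 : ℝ) = (2*m+1 : ℕ) := by rw [Nat.choose_one_right]
      have hb1 : (bernoulli 1 : ℝ) = -1/2 := by rw [bernoulli_one]; push_cast; ring
      rw [Finset.sum_congr rfl (fun I _ => by
        rw [abs_pow_even _ (⟨m, by omega⟩ : Even (2*m+1-1))] :
        ∀ I ∈ Finset.univ.filter (fun I : Finset (Fin (2*n+1)) => Odd I.card),
          Real.sign (∑ i ∈ I, r i - ∑ i ∈ Iᶜ, r i) *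
            |∑ i ∈ I, r i - ∑ i ∈ Iᶜ, r i|^(2*m+1-1)
          = Real.sign (∑ i ∈ I, r i - ∑ i ∈ Iᶜ, r i) *
            (∑ i ∈ I, r i - ∑ i ∈ Iᶜ, r i)^(2*m+1-1))]
      rw [hb1, hch]
      have he : 2*m+1-1 = 2*m := by omega
      rw [he]
      push_cast
      ring
    · intro j hj hne
      rw [Finset.mem_range] at hj
      rcases Nat.even_or_odd j with he | ho
      · rw [← Finset.mul_sum]
        have hodd : Odd (2*m+1-j) := by
          rcases he with ⟨a, rfl⟩
          have h' : 2*m+1 - (a+a) = 2*(m-a)+1 := by omega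
          rw [h']
          exact ⟨m-a, by ring⟩
        have hzero : ∑ I ∈ Finset.univ.filter
            (fun I : Finset (Fin (2*n+1)) => Odd I.card),
            Real.sign (∑ i ∈ I, r i - ∑ i ∈ Iᶜ, r i) *
              |∑ i ∈ I, r i - ∑ i ∈ Iᶜ, r i|^(2*m+1-j) = 0 := by
          rw [Finset.sum_congr rfl (fun I _ => sign_mul_abs_pow_odd _ hodd)]
          exact odd_subset_sum_pow ⟨n, by ring⟩ r _ hodd (by omega)
        rw [hzero, mul_zero]
      · have hb : (bernoulli j : ℝ) = 0 := by
          exact_mod_cast congrArg (fun q : ℚ => (q : ℝ)) (bernoulli_odd_zero ho hne)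
        rw [hb]
        simp
  rw [hval, h22]
  have h3 : ((2*m+1).factorial : ℝ) = (2*m+1 : ℕ) * ((2*m).factorial : ℝ) := by
    rw [show (2*m+1) = (2*m)+1 from rfl, Nat.factorial_succ]
    push_cast
    ring
  have hscalar : (2:ℝ)^(2*n)/π * ((-1)^n/2^(2*n)) *
      ((-1:ℝ)^(m+1) * (2*π)^(2*m+1) / 2 / (2*m+1).factorial * ((-1/2) * (2*m+1)) / (2*π)^(2*m))
      = -(1/(2*((2*m).factorial : ℝ))) := by
    have h1 : ((-1:ℝ)^n) * ((-1)^(m+1)) = 1 := by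
      rw [hnm, ← pow_add]
      exact Even.neg_one_pow ⟨m+1, by ring⟩
    have h2 : ((2*π:ℝ))^(2*m+1) = (2*π)^(2*m) * (2*π) := pow_succ _ _
    have hfac : ((2*m).factorial : ℝ) ≠ 0 := by positivity
    have hpow : ((2*π:ℝ))^(2*m) ≠ 0 := by positivity
    have h2pow : ((2:ℝ))^(2*n) ≠ 0 := by positivity
    rw [h2, h3]
    field_simp
    rw [h1]; push_cast; ring
  push_cast at hscalar ⊢
  linear_combination hscalar *
    (∑ I ∈ Finset.univ.filter (fun I : Finset (Fin (2*n+1)) => Odd I.card),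
      Real.sign (∑ i ∈ I, r i - ∑ i ∈ Iᶜ, r i) *
        (∑ i ∈ I, r i - ∑ i ∈ Iᶜ, r i)^(2*m))
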